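/- With the counting function h_i as above: h_i(m₁ + x, m₂,…,m_j) = h_i(m₁, m₂,…,m_j) + Σ_{r=0}^{x-1} h_{i-m₁-r}(m₂,…,m_j) · C(i, m₁ + r) for every non-negative integer x. -/

import Mathlib

/-- `cc i j m` is the number of colorings of `i` labeled objects with `j` colors
in which color `c` is used strictly fewer than `m c` times. -/
def cc (i j : ℕ) (m : Fin j → ℕ) : ℕ :=
  (Finset.univ.filter fun f : Fin i → Fin j =>
    ∀ c, (Finset.univ.filter fun x => f x = c).card < m c).card

open Finset

lemma fiber_comp {α β γ : Type*} [Fintype α] [Fintype β] [DecidableEq γ]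
    (e : β ≃ α) (f : α → γ) (c : γ) :
    (univ.filter fun b => f (e b) = c).card = (univ.filter fun a => f a = c).card := by
  apply Finset.card_bij (fun b _ => e b)
  · simp
  · intro a ha b hb h; exact e.injective h
  · intro a ha; exact ⟨e.symm a, by simpa using ha, by simp⟩

lemma card_filter_subtype {α : Type*} [Fintype α] [DecidableEq α] (s : Finset α)
    (p : α → Prop) [DecidablePred p] :
    (univ.filter fun y : {x // x ∈ s} => p y.1).card = (s.filter p).card := by
  apply Finset.card_bij (fun y _ => y.1)
  · intro y hy; simpa using hy
  · intro a ha b hb h; exact Subtype.ext h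
  · intro a ha; simp at ha; exact ⟨⟨a, ha.1⟩, by simp [ha.2], rfl⟩


lemma card_colorings (α : Type*) [Fintype α] [DecidableEq α] (j : ℕ) (m : Fin j → ℕ) :
    (univ.filter fun f : α → Fin j =>
      ∀ c, (univ.filter fun x => f x = c).card < m c).card = cc (Fintype.card α) j m := by
  set e := Fintype.equivFin α
  apply Finset.card_bij (fun f _ => f ∘ e.symm)
  · intro f hf
    simp only [mem_filter, mem_univ, true_and] at hf ⊢
    intro c
    have := fiber_comp e.symm f c
    simpa [Function.comp] using this ▸ hf c
  · intro f hf g hg h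
    funext a
    have := congrFun h (e a)
    simpa using this
  · intro g hg
    refine ⟨g ∘ e, ?_, by funext a; simp⟩
    simp only [mem_filter, mem_univ, true_and] at hg ⊢
    intro c
    have := fiber_comp e g c
    calc (univ.filter fun x => (g ∘ e) x = c).card = (univ.filter fun b => g (e b) = c).card := rfl
      _ = (univ.filter fun a => g a = c).card := this
      _ < m c := hg c

lemma filter_univ_eq_filter_of_subset {α : Type*} [Fintype α] [DecidableEq α]
    {s : Finset α} {p : α → Prop} [DecidablePred p] (h : ∀ x, p x → x ∈ s) :
    univ.filter p = s.filter p := by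
  ext x; simp only [mem_filter, mem_univ, true_and, iff_def]
  exact ⟨fun hx => ⟨h x hx, hx⟩, fun hx => hx.2⟩

set_option maxHeartbeats 1000000 in
lemma card_fiber_eq (i j : ℕ) (m : Fin j → ℕ) (S : Finset (Fin i)) :
    (((univ.filter fun f : Fin i → Fin (j+1) =>
        ∀ c : Fin j, (univ.filter fun x => f x = c.succ).card < m c)).filter
        fun f => (univ.filter fun x => f x = 0) = S).card
    = cc (i - S.card) j m := by
  have hcard : Fintype.card {x // x ∈ Sᶜ} = i - S.card := by
    simp [Fintype.card_coe, card_compl]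
  rw [← hcard, ← card_colorings {x // x ∈ Sᶜ} j m]
  symm
  apply Finset.card_bij (fun g _ => fun x : Fin i =>
    if h : x ∈ S then (0 : Fin (j+1)) else (g ⟨x, by simpa using h⟩).succ)
  · intro g hg
    simp only [mem_filter, mem_univ, true_and] at hg ⊢
    constructor
    · intro c
      set F := fun x : Fin i =>
        if h : x ∈ S then (0 : Fin (j+1)) else (g ⟨x, by simpa using h⟩).succ with hF
      have hsub : ∀ x, F x = c.succ → x ∈ Sᶜ := by
        intro x hx
        simp only [hF] at hx
        by_contra hxs
        simp only [mem_compl, not_not] at hxs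
        rw [dif_pos hxs] at hx
        exact (Fin.succ_ne_zero c) hx.symm
      rw [filter_univ_eq_filter_of_subset hsub, ← card_filter_subtype Sᶜ]
      have : ∀ y : {x // x ∈ Sᶜ}, (F y.1 = c.succ) ↔ (g y = c) := by
        intro y
        have hy : y.1 ∉ S := Finset.mem_compl.mp y.2
        simp only [hF, dif_neg hy]
        constructor
        · intro h; exact Fin.succ_injective _ (by simpa using h)
        · intro h; rw [show (⟨y.1, by simpa using hy⟩ : {x // x ∈ Sᶜ}) = y from Subtype.ext rfl, h]
      calc (univ.filter fun y : {x // x ∈ Sᶜ} => F y.1 = c.succ).card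
          = (univ.filter fun y : {x // x ∈ Sᶜ} => g y = c).card := by
            exact congrArg Finset.card (Finset.filter_congr fun y _ => by
              exact this y)
        _ < m c := hg c
    · ext x
      simp only [mem_filter, mem_univ, true_and]
      by_cases hx : x ∈ S
      · simp [hx]
      · simp [hx, Fin.succ_ne_zero]
  · intro g₁ h₁ g₂ h₂ h
    funext y
    have hy : y.1 ∉ S := Finset.mem_compl.mp y.2
    have := congrFun h y.1
    rw [dif_neg hy, dif_neg hy] at this
    have := Fin.succ_injective _ this
    simpa [Subtype.ext rfl] using this
  · intro f hf
    simp only [mem_filter, mem_univ, true_and] at hf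
    obtain ⟨hc, hS⟩ := hf
    have hiff : ∀ x, f x = 0 ↔ x ∈ S := by
      intro x
      rw [← hS]; simp
    have hne : ∀ y : {x // x ∈ Sᶜ}, f y.1 ≠ 0 := by
      intro y h
      exact Finset.mem_compl.mp y.2 ((hiff y.1).1 h)
    refine ⟨fun y => (f y.1).pred (hne y), ?_, ?_⟩
    · simp only [mem_filter, mem_univ, true_and]
      intro c
      have key : ∀ y : {x // x ∈ Sᶜ}, ((f y.1).pred (hne y) = c) ↔ f y.1 = c.succ := by
        intro y
        constructor
        · intro h; rw [← Fin.succ_pred (f y.1) (hne y), h]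
        · intro h; simp [h]
      calc (univ.filter fun y : {x // x ∈ Sᶜ} => (f y.1).pred (hne y) = c).card
          = (univ.filter fun y : {x // x ∈ Sᶜ} => f y.1 = c.succ).card := by
            exact congrArg Finset.card (Finset.filter_congr fun y _ => by
              exact key y)
        _ = (Sᶜ.filter fun x => f x = c.succ).card := card_filter_subtype Sᶜ (fun x => f x = c.succ)
        _ = (univ.filter fun x => f x = c.succ).card := by
            rw [filter_univ_eq_filter_of_subset]
            intro x hx
            simp only [mem_compl]
            intro hxS
            rw [(hiff x).2 hxS] at hx
            exact (Fin.succ_ne_zero c) hx.symm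
        _ < m c := hc c
    · funext x
      by_cases hx : x ∈ S
      · rw [dif_pos hx]
        exact ((hiff x).2 hx).symm
      · rw [dif_neg hx]
        exact Fin.succ_pred _ _

lemma card_exact (i j k : ℕ) (m : Fin j → ℕ) :
    (univ.filter fun f : Fin i → Fin (j+1) =>
      ((univ.filter fun x => f x = 0).card = k ∧
        ∀ c : Fin j, (univ.filter fun x => f x = c.succ).card < m c)).card
    = cc (i - k) j m * Nat.choose i k := by
  have hsplit : (univ.filter fun f : Fin i → Fin (j+1) =>
      ((univ.filter fun x => f x = 0).card = k ∧
        ∀ c : Fin j, (univ.filter fun x => f x = c.succ).card < m c))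
    = ((univ.filter fun f : Fin i → Fin (j+1) =>
        ∀ c : Fin j, (univ.filter fun x => f x = c.succ).card < m c)).filter
        fun f => (univ.filter fun x => f x = 0).card = k := by
    rw [filter_filter]
    exact filter_congr fun f _ => by tauto
  rw [hsplit]
  rw [Finset.card_eq_sum_card_fiberwise
    (f := fun f : Fin i → Fin (j+1) => univ.filter fun x => f x = 0)
    (t := Finset.powersetCard k (univ : Finset (Fin i)))
    (fun f hf => by
      simp only [mem_coe, mem_filter] at hf
      exact Finset.mem_powersetCard_univ.mpr hf.2)]
  have hterm : ∀ S ∈ Finset.powersetCard k (univ : Finset (Fin i)),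
      ((((univ.filter fun f : Fin i → Fin (j+1) =>
        ∀ c : Fin j, (univ.filter fun x => f x = c.succ).card < m c)).filter
        fun f => (univ.filter fun x => f x = 0).card = k).filter
        fun f => (univ.filter fun x => f x = 0) = S).card = cc (i - k) j m := by
    intro S hS
    have hSk : S.card = k := Finset.mem_powersetCard_univ.mp hS
    rw [← hSk, ← card_fiber_eq i j m S]
    congr 1
    ext f
    simp only [mem_filter, mem_univ, true_and]
    constructor
    · rintro ⟨⟨h1, h2⟩, h3⟩; exact ⟨h1, h3⟩
    · rintro ⟨h1, h3⟩; exact ⟨⟨h1, by rw [h3, hSk]⟩, h3⟩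
  rw [Finset.sum_congr rfl hterm, Finset.sum_const, smul_eq_mul,
    Finset.card_powersetCard, Finset.card_univ, Fintype.card_fin, mul_comm]

lemma cc_cons_eq (i j M : ℕ) (m : Fin j → ℕ) :
    cc i (j+1) (Fin.cons M m) = (univ.filter fun f : Fin i → Fin (j+1) =>
      ((univ.filter fun x => f x = 0).card < M ∧
        ∀ c : Fin j, (univ.filter fun x => f x = c.succ).card < m c)).card := by
  unfold cc
  congr 1
  apply filter_congr
  intro f _
  rw [Fin.forall_fin_succ]
  simp [Fin.cons_zero, Fin.cons_succ]

lemma cc_step (i j M : ℕ) (m : Fin j → ℕ) :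
    cc i (j+1) (Fin.cons (M+1) m)
      = cc i (j+1) (Fin.cons M m) + cc (i - M) j m * Nat.choose i M := by
  rw [cc_cons_eq, cc_cons_eq, ← card_exact i j M m]
  rw [← Finset.card_union_of_disjoint (by
    rw [Finset.disjoint_filter]
    rintro f _ ⟨h1, _⟩ ⟨h2, _⟩
    omega)]
  congr 1
  rw [← Finset.filter_or]
  apply filter_congr
  intro f _
  constructor
  · rintro ⟨h1, h2⟩
    rcases Nat.lt_succ_iff_lt_or_eq.mp h1 with h | h
    · exact Or.inl ⟨h, h2⟩
    · exact Or.inr ⟨h, h2⟩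
  · rintro (⟨h1, h2⟩ | ⟨h1, h2⟩)
    · exact ⟨Nat.lt_succ_of_lt h1, h2⟩
    · exact ⟨by omega, h2⟩

theorem stmt16 (i j : ℕ) (m₁ : ℕ) (m : Fin j → ℕ) (hm₁ : 0 < m₁) (hm : ∀ c, 0 < m c)
    (x : ℕ) :
    cc i (j + 1) (Fin.cons (m₁ + x) m)
      = cc i (j + 1) (Fin.cons m₁ m)
        + ∑ r ∈ Finset.range x, cc (i - m₁ - r) j m * Nat.choose i (m₁ + r) := by
  induction x with
  | zero => simp
  | succ n ih =>
    rw [← Nat.add_assoc, cc_step, ih, Finset.sum_range_succ, Nat.sub_sub, Nat.add_assoc]
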